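/- arXiv:2209.02588 — 2 statements merged into one kernel-verified Lean document; each statement's English description precedes it below -/
import Mathlib

section
/- For natural numbers m, n, r, l with l ≤ r, the sum over k from 0 to r of (k!/(k-l)!) * C(m, k) * C(n, r-k) equals (m!/(m-l)!) * C(m+n-l, r-l), where k!/(k-l)! is interpreted as 0 when k < l and m!/(m-l)! as 0 when m < l. -/
lemma desc_choose_key (m k l : ℕ) (hlk : l ≤ k) :
    Nat.descFactorial k l * Nat.choose m k
      = Nat.descFactorial m l * Nat.choose (m - l) (k - l) := by
  rcases Nat.lt_or_ge m l with hml | hml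
  · rw [Nat.descFactorial_eq_zero_iff_lt.2 hml, Nat.zero_mul,
      Nat.choose_eq_zero_of_lt (lt_of_lt_of_le hml hlk), Nat.mul_zero]
  · rcases le_or_gt k m with hkm | hkm
    · rw [Nat.descFactorial_eq_factorial_mul_choose,
        Nat.descFactorial_eq_factorial_mul_choose, Nat.mul_assoc, Nat.mul_assoc,
        Nat.mul_comm (Nat.choose k l), Nat.choose_mul hlk]
    · rw [Nat.choose_eq_zero_of_lt hkm,
        Nat.choose_eq_zero_of_lt (by omega : m - l < k - l), Nat.mul_zero, Nat.mul_zero]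

theorem general_vandermonde (m n r l : ℕ) (hl : l ≤ r) :
    ∑ k ∈ Finset.range (r + 1),
        Nat.descFactorial k l * Nat.choose m k * Nat.choose n (r - k)
      = Nat.descFactorial m l * Nat.choose (m + n - l) (r - l) := by
  have h1 : ∑ k ∈ Finset.range (r + 1),
      Nat.descFactorial k l * Nat.choose m k * Nat.choose n (r - k)
      = ∑ k ∈ Finset.Ico l (r + 1),
        Nat.descFactorial k l * Nat.choose m k * Nat.choose n (r - k) := by
    rw [Finset.range_eq_Ico]
    refine (Finset.sum_subset (Finset.Ico_subset_Ico (Nat.zero_le _) le_rfl) ?_).symm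
    intro k hk hk'
    simp only [Finset.mem_Ico] at hk hk'
    have : k < l := by omega
    rw [Nat.descFactorial_eq_zero_iff_lt.2 this, Nat.zero_mul, Nat.zero_mul]
  rw [h1, Finset.sum_Ico_eq_sum_range]
  have h2 : r + 1 - l = (r - l) + 1 := by omega
  rw [h2]
  have h3 : ∀ j ∈ Finset.range (r - l + 1),
      Nat.descFactorial (l + j) l * Nat.choose m (l + j) * Nat.choose n (r - (l + j))
      = Nat.descFactorial m l * (Nat.choose (m - l) j * Nat.choose n (r - l - j)) := by
    intro j hj
    rw [desc_choose_key m (l + j) l (Nat.le_add_right _ _)]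
    have : l + j - l = j := by omega
    rw [this, (by omega : r - (l + j) = r - l - j), Nat.mul_assoc]
  rw [Finset.sum_congr rfl h3, ← Finset.mul_sum]
  rcases Nat.lt_or_ge m l with hml | hml
  · rw [Nat.descFactorial_eq_zero_iff_lt.2 hml, Nat.zero_mul, Nat.zero_mul]
  · congr 1
    have : m + n - l = (m - l) + n := by omega
    rw [this, Nat.add_choose_eq, Finset.Nat.sum_antidiagonal_eq_sum_range_succ_mk]
end

section
/- For natural numbers m, n, r, l with l ≤ m, the coefficient of x^(r-l) in (m!/(m-l)!) * (1+x)^(m+n-l) equals the sum over k from l to r of (k!/(k-l)!) * C(m, k) * C(n, r-k). -/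
lemma choose_aux (m l i : ℕ) (hlm : l ≤ m) :
    Nat.descFactorial m l * (m - l).choose i
      = Nat.descFactorial (l + i) l * m.choose (l + i) := by
  rw [Nat.descFactorial_eq_factorial_mul_choose, Nat.descFactorial_eq_factorial_mul_choose]
  rcases le_or_gt (l + i) m with h | h
  · have := Nat.choose_mul (n := m) (k := l + i) (s := l) (Nat.le_add_right _ _)
    rw [Nat.add_sub_cancel_left] at this
    rw [mul_assoc, mul_assoc, ← this]
    ring
  · rw [Nat.choose_eq_zero_of_lt h, Nat.choose_eq_zero_of_lt (show m - l < i by omega)]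
    simp

lemma key_nat (m n r l : ℕ) (hlm : l ≤ m) (hlr : l ≤ r) :
    Nat.descFactorial m l * (m + n - l).choose (r - l)
      = ∑ k ∈ Finset.Icc l r,
          Nat.descFactorial k l * m.choose k * n.choose (r - k) := by
  rw [show m + n - l = (m - l) + n by omega, Nat.add_choose_eq,
    Finset.Nat.sum_antidiagonal_eq_sum_range_succ_mk, Finset.mul_sum,
    show Finset.Icc l r = Finset.Ico l (r + 1) by rw [Finset.Ico_add_one_right_eq_Icc],
    Finset.sum_Ico_eq_sum_range, show r + 1 - l = r - l + 1 by omega]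
  refine Finset.sum_congr rfl fun i _ => ?_
  rw [show r - (l + i) = r - l - i by omega, ← mul_assoc, choose_aux m l i hlm]

theorem coeff_general (m n r l : ℕ) (hlm : l ≤ m) (hlr : l ≤ r) (hr : r ≤ m + n) :
    ((Nat.descFactorial m l : Polynomial ℚ) * (Polynomial.X + 1) ^ (m + n - l)).coeff (r - l)
      = ∑ k ∈ Finset.Icc l r,
          (Nat.descFactorial k l : ℚ) * (Nat.choose m k : ℚ) * (Nat.choose n (r - k) : ℚ) := by
  rw [← Polynomial.C_eq_natCast, Polynomial.coeff_C_mul, Polynomial.coeff_X_add_one_pow]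
  have h := key_nat m n r l hlm hlr
  have h' : ((Nat.descFactorial m l * (m + n - l).choose (r - l) : ℕ) : ℚ)
      = ((∑ k ∈ Finset.Icc l r,
          Nat.descFactorial k l * m.choose k * n.choose (r - k) : ℕ) : ℚ) := by
    exact_mod_cast h
  push_cast at h'
  exact h'
end
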